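/- (Proposition 3) Let m be a positive integer, τ > 0, λ > 0, N > 0, and c ∈ ℝ^m. Define g*_λ(q) = (N/λ)·∑_{k=1}^m e^{λ(q_k − c_k) − 1}. Then for every p ∈ ℝ^m, the function q ↦ ‖q − p‖²/(2τ) + g*_λ(q) has a unique minimizer q* = prox_{τ g*_λ}(p), given coordinatewise by q*_k = p_k − (1/λ)·W(λτN·e^{λ(p_k − c_k) − 1}), where W(z) denotes the unique real solution w ≥ 0 of w·e^w = z for z ≥ 0. -/

import Mathlib

open scoped BigOperators

/-- The conjugate Sinkhorn term `g*_λ(q) = (N/λ)·∑_k e^{λ(q_k − c_k) − 1}`. -/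
noncomputable def gStar {m : ℕ} (lam N : ℝ) (c q : Fin m → ℝ) : ℝ :=
  (N / lam) * ∑ k, Real.exp (lam * (q k - c k) - 1)

private lemma lambert_exists (z : ℝ) (hz : 0 ≤ z) :
    ∃ w, 0 ≤ w ∧ w * Real.exp w = z := by
  have hcont : ContinuousOn (fun w : ℝ => w * Real.exp w) (Set.Icc 0 z) :=
    (continuous_id.mul Real.continuous_exp).continuousOn
  have h := intermediate_value_Icc hz hcont
  have hz' : z ∈ Set.Icc ((fun w : ℝ => w * Real.exp w) 0)
      ((fun w : ℝ => w * Real.exp w) z) := by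
    constructor
    · simp [hz]
    · have h1 : 1 ≤ Real.exp z := Real.one_le_exp hz
      simp only
      nlinarith
  obtain ⟨w, hw, hwe⟩ := h hz'
  exact ⟨w, hw.1, hwe⟩

private lemma key (tau lam N c p q x : ℝ) (htau : 0 < tau) (hlam : 0 < lam) (hN : 0 < N)
    (hs : lam * (p - q) = lam * tau * N * Real.exp (lam * (q - c) - 1)) :
    (q - p) ^ 2 / (2 * tau) + (N / lam) * Real.exp (lam * (q - c) - 1)
      + (x - q) ^ 2 / (2 * tau)
      ≤ (x - p) ^ 2 / (2 * tau) + (N / lam) * Real.exp (lam * (x - c) - 1) := by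
  set E := Real.exp (lam * (q - c) - 1) with hE
  have hEpos : 0 < E := Real.exp_pos _
  have hpq : p - q = tau * N * E := by
    apply mul_left_cancel₀ (ne_of_gt hlam)
    rw [hs]; ring
  have hexp : E * (1 + lam * (x - q)) ≤ Real.exp (lam * (x - c) - 1) := by
    have h1 : 1 + lam * (x - q) ≤ Real.exp (lam * (x - q)) := by
      have := Real.add_one_le_exp (lam * (x - q)); linarith
    have h2 : Real.exp (lam * (x - c) - 1) = E * Real.exp (lam * (x - q)) := by
      rw [hE, ← Real.exp_add]; ring_nf
    rw [h2]
    nlinarith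
  have hmul : (N / lam) * (E * (1 + lam * (x - q))) ≤ (N / lam) * Real.exp (lam * (x - c) - 1) :=
    mul_le_mul_of_nonneg_left hexp (by positivity)
  have heq : (q - p) ^ 2 / (2 * tau) + (N / lam) * E + (x - q) ^ 2 / (2 * tau)
      = (x - p) ^ 2 / (2 * tau) + (N / lam) * (E * (1 + lam * (x - q))) := by
    have hp : p = q + tau * N * E := by linarith
    subst hp
    field_simp
    ring
  linarith

theorem prox_sinkhorn (m : ℕ) (hm : 0 < m) (tau lam N : ℝ)
    (htau : 0 < tau) (hlam : 0 < lam) (hN : 0 < N)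
    (c p : Fin m → ℝ) :
    (∃! q : Fin m → ℝ, ∀ q' : Fin m → ℝ,
        (∑ k, (q k - p k) ^ 2) / (2 * tau) + gStar lam N c q
          ≤ (∑ k, (q' k - p k) ^ 2) / (2 * tau) + gStar lam N c q') ∧
    (∀ q : Fin m → ℝ,
      (∀ q' : Fin m → ℝ,
        (∑ k, (q k - p k) ^ 2) / (2 * tau) + gStar lam N c q
          ≤ (∑ k, (q' k - p k) ^ 2) / (2 * tau) + gStar lam N c q') →
      ∀ k, ∃ w : ℝ, 0 ≤ w ∧
        w * Real.exp w = lam * tau * N * Real.exp (lam * (p k - c k) - 1) ∧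
        q k = p k - (1 / lam) * w) := by
  have hz : ∀ k : Fin m, (0:ℝ) ≤ lam * tau * N * Real.exp (lam * (p k - c k) - 1) :=
    fun k => by positivity
  choose w hw0 hwe using fun k => lambert_exists _ (hz k)
  set qs : Fin m → ℝ := fun k => p k - (1 / lam) * w k with hqs
  have hstat : ∀ k, lam * (p k - qs k)
      = lam * tau * N * Real.exp (lam * (qs k - c k) - 1) := by
    intro k
    have h1 : lam * (p k - qs k) = w k := by
      simp only [hqs]; field_simp; ring
    have h2 : lam * (qs k - c k) - 1 = (lam * (p k - c k) - 1) - w k := by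
      simp only [hqs]; field_simp; ring
    rw [h1, h2, Real.exp_sub]
    have hepos : (0:ℝ) < Real.exp (w k) := Real.exp_pos _
    field_simp
    linear_combination hwe k
  have hmin : ∀ q' : Fin m → ℝ,
      (∑ k, (qs k - p k) ^ 2) / (2 * tau) + gStar lam N c qs
        + (∑ k, (q' k - qs k) ^ 2) / (2 * tau)
        ≤ (∑ k, (q' k - p k) ^ 2) / (2 * tau) + gStar lam N c q' := by
    intro q'
    unfold gStar
    rw [Finset.sum_div, Finset.sum_div, Finset.sum_div, Finset.mul_sum, Finset.mul_sum,
      ← Finset.sum_add_distrib, ← Finset.sum_add_distrib, ← Finset.sum_add_distrib]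
    apply Finset.sum_le_sum
    intro k _
    exact key tau lam N (c k) (p k) (qs k) (q' k) htau hlam hN (hstat k)
  have hP : ∀ q' : Fin m → ℝ,
      (∑ k, (qs k - p k) ^ 2) / (2 * tau) + gStar lam N c qs
        ≤ (∑ k, (q' k - p k) ^ 2) / (2 * tau) + gStar lam N c q' := by
    intro q'
    have h1 := hmin q'
    have h2 : (0:ℝ) ≤ (∑ k, (q' k - qs k) ^ 2) / (2 * tau) := by positivity
    linarith
  have huniq : ∀ y : Fin m → ℝ,
      (∀ q' : Fin m → ℝ,
        (∑ k, (y k - p k) ^ 2) / (2 * tau) + gStar lam N c y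
          ≤ (∑ k, (q' k - p k) ^ 2) / (2 * tau) + gStar lam N c q') → y = qs := by
    intro y hy
    have h1 := hmin y
    have h2 := hy qs
    have h3 : (∑ k, (y k - qs k) ^ 2) / (2 * tau) ≤ 0 := by linarith
    have h4 : (∑ k, (y k - qs k) ^ 2) ≤ 0 := by
      by_contra h
      push_neg at h
      have : (0:ℝ) < (∑ k, (y k - qs k) ^ 2) / (2 * tau) := by positivity
      linarith
    have h5 : (∑ k, (y k - qs k) ^ 2) = 0 :=
      le_antisymm h4 (Finset.sum_nonneg fun k _ => sq_nonneg _)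
    funext k
    have h6 := (Finset.sum_eq_zero_iff_of_nonneg
      (fun k _ => sq_nonneg (y k - qs k))).mp h5 k (Finset.mem_univ k)
    have := pow_eq_zero_iff (n := 2) (by norm_num) |>.mp h6
    linarith [sub_eq_zero.mp this]
  refine ⟨⟨qs, hP, huniq⟩, ?_⟩
  intro q hq k
  have hqeq : q = qs := huniq q hq
  exact ⟨w k, hw0 k, hwe k, by rw [hqeq]⟩
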